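/- arXiv:1603.08129 — 6 statements merged into one kernel-verified Lean document; each statement's English description precedes it below -/
import Mathlib

section
/- Let Π be an n×n stochastic matrix such that Πᴺ has all positive entries for some N. If ν is a probability distribution on {1,…,n} that is both the initial and the time-N marginal of the time-homogeneous Markov chain with transition matrix Π, i.e., (Πᵀ)ᴺ ν = ν, then ν is invariant for Π: Πᵀ ν = ν. -/
open Matrix

/-- Key lemma: if `A` is entrywise positive with row sums 1, and `w` is a fixed
point of `Aᵀ` with coordinate sum 0, then `w = 0`. -/
lemma key_fixed_zero (n : ℕ) (A : Matrix (Fin n) (Fin n) ℝ)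
    (hA0 : ∀ i j, 0 < A i j) (hArow : ∀ i, ∑ j, A i j = 1)
    (w : Fin n → ℝ) (hw : Aᵀ *ᵥ w = w) (hsum : ∑ i, w i = 0) : w = 0 := by
  set p : Fin n → ℝ := fun i => max (w i) 0 with hp
  have hwj : ∀ j, w j = ∑ i, A i j * w i := by
    intro j
    have := congrFun hw j
    simpa [Matrix.mulVec, dotProduct, Matrix.transpose_apply] using this.symm
  have hple : ∀ j, p j ≤ ∑ i, A i j * p i := by
    intro j
    apply max_le
    · rw [hwj j]
      exact Finset.sum_le_sum fun i _ =>
        mul_le_mul_of_nonneg_left (le_max_left _ _) (hA0 i j).le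
    · exact Finset.sum_nonneg fun i _ =>
        mul_nonneg (hA0 i j).le (le_max_right _ _)
  have hsum_eq : ∑ j, ∑ i, A i j * p i = ∑ j, p j := by
    rw [Finset.sum_comm]
    exact Finset.sum_congr rfl fun i _ => by
      rw [← Finset.sum_mul, hArow, one_mul]
  have heq : ∀ j, p j = ∑ i, A i j * p i := by
    have h := (Finset.sum_eq_sum_iff_of_le (fun j _ => hple j)).mp hsum_eq.symm
    exact fun j => h j (Finset.mem_univ j)
  by_cases hneg : ∃ j, w j < 0
  · obtain ⟨j, hj⟩ := hneg
    have hpj : p j = 0 := max_eq_right hj.le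
    have hzero : ∀ i, p i = 0 := by
      have h0 : ∑ i, A i j * p i = 0 := by rw [← heq j, hpj]
      intro i
      have := (Finset.sum_eq_zero_iff_of_nonneg (fun i _ =>
        mul_nonneg (hA0 i j).le (le_max_right _ _))).mp h0 i (Finset.mem_univ i)
      have hAij := (hA0 i j).ne'
      rcases mul_eq_zero.mp this with h | h
      · exact absurd h hAij
      · exact h
    have hwle : ∀ i, w i ≤ 0 := fun i => by
      have := hzero i
      simp [hp, max_eq_right_iff] at this
      linarith [le_max_left (w i) 0, this]
    funext i
    have := (Finset.sum_eq_zero_iff_of_nonpos (fun i _ => hwle i)).mp hsum i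
      (Finset.mem_univ i)
    simpa using this
  · push_neg at hneg
    funext i
    have := (Finset.sum_eq_zero_iff_of_nonneg (fun i _ => hneg i)).mp hsum i
      (Finset.mem_univ i)
    simpa using this

lemma pow_row_sum (n N : ℕ) (P : Matrix (Fin n) (Fin n) ℝ)
    (hProw : ∀ i, ∑ j, P i j = 1) : ∀ i, ∑ j, (P ^ N) i j = 1 := by
  induction N with
  | zero => intro i; simp [Matrix.one_apply]
  | succ k ih =>
    intro i
    rw [pow_succ]
    simp only [Matrix.mul_apply]
    rw [Finset.sum_comm]
    calc ∑ l, ∑ j, (P ^ k) i l * P l j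
        = ∑ l, (P ^ k) i l * ∑ j, P l j := by simp_rw [Finset.mul_sum]
      _ = ∑ l, (P ^ k) i l := by simp_rw [hProw, mul_one]
      _ = 1 := ih i

/-- If a probability vector is a fixed point of `(Πᵀ)ᴺ` for a stochastic matrix `Π`
with `Πᴺ` entrywise positive, then it is invariant for `Π`. -/
theorem fixed_point_of_power_is_invariant
    (n N : ℕ) (P : Matrix (Fin n) (Fin n) ℝ)
    (hP0 : ∀ i j, 0 ≤ P i j) (hProw : ∀ i, ∑ j, P i j = 1)
    (hPN : ∀ i j, 0 < (P ^ N) i j)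
    (ν : Fin n → ℝ) (hν0 : ∀ i, 0 ≤ ν i) (hν1 : ∑ i, ν i = 1)
    (hfix : (Pᵀ) ^ N *ᵥ ν = ν) :
    Pᵀ *ᵥ ν = ν := by
  set A := P ^ N with hA
  have hArow : ∀ i, ∑ j, A i j = 1 := pow_row_sum n N P hProw
  set w : Fin n → ℝ := Pᵀ *ᵥ ν - ν with hwdef
  have hAw : Aᵀ *ᵥ w = w := by
    have hAT : Aᵀ = (Pᵀ) ^ N := by rw [hA, Matrix.transpose_pow]
    rw [hwdef, hAT, Matrix.mulVec_sub, hfix]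
    congr 1
    rw [Matrix.mulVec_mulVec, ← pow_succ, pow_succ', ← Matrix.mulVec_mulVec, hfix]
  have hsumw : ∑ i, w i = 0 := by
    have hsumPv : ∑ j, (Pᵀ *ᵥ ν) j = 1 := by
      simp only [Matrix.mulVec, dotProduct, Matrix.transpose_apply]
      rw [Finset.sum_comm]
      calc ∑ i, ∑ j, P i j * ν i
          = ∑ i, ν i * ∑ j, P i j := by
            simp_rw [Finset.mul_sum]; congr 1; ext i; congr 1; ext j; ring
        _ = ∑ i, ν i := by simp_rw [hProw, mul_one]
        _ = 1 := hν1
    simp [hwdef, Finset.sum_sub_distrib, hsumPv, hν1]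
  have hw0 : w = 0 := key_fixed_zero n A hPN hArow w hAw hsumw
  have := sub_eq_zero.mp hw0
  exact this
end

section
/- Let M be an n×n matrix with all entries positive. Suppose there exist entrywise positive vectors φ(0), φ(1), φ(2) ∈ ℝⁿ with φ(0) = Mφ(1), φ(1) = Mφ(2), and such that diag(φ(0))⁻¹ M diag(φ(1)) = diag(φ(1))⁻¹ M diag(φ(2)). Then there exists λ > 0 with φ(2) = λ⁻¹ φ(1), and φ(1) is a right eigenvector of M with eigenvalue λ; in particular λ equals the spectral radius of M. -/
open Matrix

/-- Spectral radius of a real square matrix: the largest modulus of a complex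
eigenvalue. -/
noncomputable def specRad {n : ℕ} (M : Matrix (Fin n) (Fin n) ℝ) : ℝ :=
  sSup {r : ℝ | ∃ μ ∈ spectrum ℂ (M.map (algebraMap ℝ ℂ)), r = ‖μ‖}


lemma spec_iff_aux (n : ℕ) (A : Matrix (Fin n) (Fin n) ℂ) (μ : ℂ) :
    μ ∈ spectrum ℂ A ↔ ∃ v ≠ 0, A *ᵥ v = μ • v := by
  rw [spectrum.mem_iff, Matrix.isUnit_iff_isUnit_det, isUnit_iff_ne_zero, not_ne_iff,
    ← Matrix.exists_mulVec_eq_zero_iff]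
  refine exists_congr fun v => and_congr_right fun hv => ?_
  rw [Matrix.sub_mulVec, sub_eq_zero, Algebra.algebraMap_eq_smul_one,
    Matrix.smul_mulVec, Matrix.one_mulVec]
  exact eq_comm

lemma perron_aux (n : ℕ) (hn : 1 ≤ n) (M : Matrix (Fin n) (Fin n) ℝ)
    (hM : ∀ i j, 0 < M i j) (φ : Fin n → ℝ) (hφ : ∀ i, 0 < φ i)
    (lam : ℝ) (hlam : 0 < lam) (h : M *ᵥ φ = lam • φ) : lam = specRad M := by
  have i0 : Fin n := ⟨0, hn⟩
  set S : Set ℝ := {r : ℝ | ∃ μ ∈ spectrum ℂ (M.map (algebraMap ℝ ℂ)), r = ‖μ‖}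
    with hS
  have hmem : lam ∈ S := by
    refine ⟨(lam : ℂ), ?_, by rw [Complex.norm_real, Real.norm_eq_abs, abs_of_pos hlam]⟩
    rw [spec_iff_aux]
    refine ⟨fun i => (φ i : ℂ), ?_, ?_⟩
    · intro hv
      have := congrFun hv i0
      simp only [Pi.zero_apply, Complex.ofReal_eq_zero] at this
      exact (hφ i0).ne' this
    · funext i
      have hh := congrFun h i
      simp only [Matrix.mulVec, dotProduct, Pi.smul_apply, smul_eq_mul] at hh ⊢
      simp only [Matrix.map_apply, Complex.coe_algebraMap]
      exact_mod_cast congrArg (Complex.ofReal) hh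
  have hub : ∀ r ∈ S, r ≤ lam := by
    rintro r ⟨μ, hμ, rfl⟩
    rw [spec_iff_aux] at hμ
    obtain ⟨v, hv, hvec⟩ := hμ
    set g : Fin n → ℝ := fun i => ‖v i‖ with hg
    obtain ⟨i1, -, hi1⟩ := Finset.exists_max_image Finset.univ (fun i => g i / φ i)
      ⟨i0, Finset.mem_univ i0⟩
    set t : ℝ := g i1 / φ i1 with ht
    have hgpos : 0 < g i1 := by
      obtain ⟨k, hk⟩ := Function.ne_iff.mp hv
      have hk' : 0 < g k := by simpa [hg] using hk
      have h3 : 0 < t := lt_of_lt_of_le (div_pos hk' (hφ k)) (hi1 k (Finset.mem_univ k))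
      have := mul_pos h3 (hφ i1)
      rwa [ht, div_mul_cancel₀ _ (hφ i1).ne'] at this
    have htb : ∀ j, g j ≤ t * φ j := fun j =>
      (div_le_iff₀ (hφ j)).mp (hi1 j (Finset.mem_univ j))
    have hineq : ‖μ‖ * g i1 ≤ lam * g i1 := by
      calc ‖μ‖ * g i1 = ‖μ * v i1‖ := (norm_mul _ _).symm
        _ = ‖((M.map (algebraMap ℝ ℂ)) *ᵥ v) i1‖ := by
            rw [hvec]; simp
        _ ≤ ∑ j, ‖(M i1 j : ℂ) * v j‖ := by
            rw [Matrix.mulVec, dotProduct]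
            exact norm_sum_le _ _
        _ = ∑ j, M i1 j * g j := Finset.sum_congr rfl fun j _ => by
            rw [norm_mul, Complex.norm_real, Real.norm_eq_abs, abs_of_pos (hM i1 j)]
        _ ≤ ∑ j, M i1 j * (t * φ j) := Finset.sum_le_sum fun j _ =>
            mul_le_mul_of_nonneg_left (htb j) (hM i1 j).le
        _ = t * (M *ᵥ φ) i1 := by
            simp only [Matrix.mulVec, dotProduct, Finset.mul_sum]
            exact Finset.sum_congr rfl fun j _ => by ring
        _ = lam * g i1 := by
            rw [h, Pi.smul_apply, smul_eq_mul, ht]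
            rw [div_mul_eq_mul_div, div_eq_iff (hφ i1).ne']
            ring
    exact le_of_mul_le_mul_right hineq hgpos
  rw [specRad, ← hS]
  exact le_antisymm (le_csSup ⟨lam, hub⟩ hmem) (csSup_le ⟨lam, hmem⟩ hub)

/-- If a positive matrix `M` and positive vectors `φ(0) = Mφ(1)`, `φ(1) = Mφ(2)`
give rise to the same one-step transition matrix on two consecutive steps, then
`φ(2)` is proportional to `φ(1)`, which is a positive eigenvector of `M`, with
eigenvalue the spectral radius of `M`. -/
theorem equal_transitions_force_perron_eigenvector
    (n : ℕ) (hn : 1 ≤ n) (M : Matrix (Fin n) (Fin n) ℝ)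
    (hM : ∀ i j, 0 < M i j)
    (φ0 φ1 φ2 : Fin n → ℝ)
    (hφ0 : ∀ i, 0 < φ0 i) (hφ1 : ∀ i, 0 < φ1 i) (hφ2 : ∀ i, 0 < φ2 i)
    (h0 : φ0 = M *ᵥ φ1) (h1 : φ1 = M *ᵥ φ2)
    (heq : (Matrix.diagonal φ0)⁻¹ * M * Matrix.diagonal φ1 =
      (Matrix.diagonal φ1)⁻¹ * M * Matrix.diagonal φ2) :
    ∃ lam : ℝ, 0 < lam ∧ φ2 = lam⁻¹ • φ1 ∧
      M *ᵥ φ1 = lam • φ1 ∧ lam = specRad M := by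
  have hinv : ∀ (v : Fin n → ℝ), (∀ i, 0 < v i) →
      (Matrix.diagonal v)⁻¹ = Matrix.diagonal (fun i => (v i)⁻¹) := by
    intro v hv
    apply Matrix.inv_eq_right_inv
    rw [Matrix.diagonal_mul_diagonal]
    have : (fun i => v i * (v i)⁻¹) = fun _ => (1 : ℝ) :=
      funext fun i => mul_inv_cancel₀ (hv i).ne'
    rw [this, Matrix.diagonal_one]
  have key : ∀ i j, (φ0 i)⁻¹ * M i j * φ1 j = (φ1 i)⁻¹ * M i j * φ2 j := by
    intro i j
    have := congrFun (congrFun heq i) j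
    rwa [hinv φ0 hφ0, hinv φ1 hφ1, Matrix.mul_diagonal, Matrix.mul_diagonal,
      Matrix.diagonal_mul, Matrix.diagonal_mul] at this
  have i0 : Fin n := ⟨0, hn⟩
  set c : ℝ := φ1 i0 / φ0 i0 with hc
  have hcpos : 0 < c := div_pos (hφ1 i0) (hφ0 i0)
  have hφ2eq : φ2 = c • φ1 := by
    funext j
    have hk := key i0 j
    have hMne := (hM i0 j).ne'
    have h0ne := (hφ0 i0).ne'
    have h1ne := (hφ1 i0).ne'
    field_simp at hk
    have h3 : M i0 j * (φ1 i0 * φ1 j) = M i0 j * (φ0 i0 * φ2 j) := by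
      linear_combination M i0 j * hk
    have h4 : φ1 i0 * φ1 j = φ0 i0 * φ2 j := mul_left_cancel₀ hMne h3
    show φ2 j = c * φ1 j
    rw [hc, div_mul_eq_mul_div, eq_div_iff h0ne]
    linear_combination -h4
  refine ⟨c⁻¹, inv_pos.mpr hcpos, by rw [inv_inv, hφ2eq], ?_, ?_⟩
  · have hφ1c : φ1 = c • φ0 := by
      rw [h1, hφ2eq, Matrix.mulVec_smul, ← h0]
    rw [← h0, hφ1c, smul_smul, inv_mul_cancel₀ hcpos.ne', one_smul]
  · refine perron_aux n hn M hM φ1 hφ1 c⁻¹ (inv_pos.mpr hcpos) ?_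
    have hφ1c : φ1 = c • φ0 := by
      rw [h1, hφ2eq, Matrix.mulVec_smul, ← h0]
    rw [← h0, hφ1c, smul_smul, inv_mul_cancel₀ hcpos.ne', one_smul]
end

section
/- Let M be a nonnegative n×n matrix with Mᴺ entrywise positive, and suppose φ, φ̂ : {0,…,N}×{1,…,n} → ℝ≥0 solve the Schrödinger system φ(t) = Mφ(t+1), φ̂(t+1) = Mᵀφ̂(t) with boundary conditions φ(0,x)φ̂(0,x) = ν₀(x) and φ(N,x)φ̂(N,x) = ν_N(x), where ν₀, ν_N are probability vectors and all φ(t,x) > 0. Then the path measure P*(x₀,…,x_N) := ν₀(x₀) ∏_{t=0}^{N−1} m_{x_t x_{t+1}} φ(t+1, x_{t+1})/φ(t, x_t) is a probability measure on {1,…,n}^{N+1} whose time-0 marginal is ν₀ and whose time-N marginal is ν_N. -/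
open Matrix Finset

/-- Propagate a weight vector through a sequence of kernels. -/
def propW (n : ℕ) : (K : ℕ) → (Fin K → Matrix (Fin n) (Fin n) ℝ) → (Fin n → ℝ) → (Fin n → ℝ)
  | 0, _, w => w
  | (K+1), P, w => propW n K (fun s => P s.succ) (fun j => ∑ i, w i * P 0 i j)

lemma pathSum (n : ℕ) : ∀ (K : ℕ) (P : Fin K → Matrix (Fin n) (Fin n) ℝ) (w g : Fin n → ℝ),
    (∑ x : Fin (K+1) → Fin n,
      w (x 0) * (∏ t : Fin K, P t (x t.castSucc) (x t.succ)) * g (x (Fin.last K)))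
    = ∑ j, propW n K P w j * g j
  | 0, P, w, g => by
      rw [← (Equiv.funUnique (Fin 1) (Fin n)).symm.sum_comp]
      simp [propW]
  | (K+1), P, w, g => by
      rw [← (Fin.consEquiv (fun _ : Fin (K+2) => Fin n)).sum_comp]
      rw [Fintype.sum_prod_type]
      have key : ∀ (x0 : Fin n) (y : Fin (K+1) → Fin n),
          w ((Fin.consEquiv (fun _ : Fin (K+2) => Fin n)) (x0, y) 0) *
            (∏ t : Fin (K+1), P t ((Fin.consEquiv (fun _ : Fin (K+2) => Fin n)) (x0, y) t.castSucc)
              ((Fin.consEquiv (fun _ : Fin (K+2) => Fin n)) (x0, y) t.succ)) *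
            g ((Fin.consEquiv (fun _ : Fin (K+2) => Fin n)) (x0, y) (Fin.last (K+1)))
          = (w x0 * P 0 x0 (y 0)) *
              ((∏ s : Fin K, P s.succ (y s.castSucc) (y s.succ)) * g (y (Fin.last K))) := by
        intro x0 y
        simp only [Fin.consEquiv_apply, Fin.prod_univ_succ, Fin.cons_zero, Fin.cons_succ,
          Fin.castSucc_zero, ← Fin.succ_castSucc, ← Fin.succ_last, Fin.cons_succ]
        ring
      simp only [key]
      rw [Finset.sum_comm]
      have : ∀ y : Fin (K+1) → Fin n,
          (∑ x0, (w x0 * P 0 x0 (y 0)) *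
            ((∏ s : Fin K, P s.succ (y s.castSucc) (y s.succ)) * g (y (Fin.last K))))
          = (fun j => ∑ i, w i * P 0 i j) (y 0) *
              (∏ s : Fin K, P s.succ (y s.castSucc) (y s.succ)) * g (y (Fin.last K)) := by
        intro y
        rw [← Finset.sum_mul]
        ring
      simp only [this]
      rw [pathSum n K (fun s => P s.succ) (fun j => ∑ i, w i * P 0 i j) g]
      rfl

lemma propW_sum (n : ℕ) : ∀ (K : ℕ) (P : Fin K → Matrix (Fin n) (Fin n) ℝ) (w : Fin n → ℝ),
    (∀ t i, ∑ j, P t i j = 1) → (∑ j, propW n K P w j) = ∑ i, w i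
  | 0, P, w, h => rfl
  | (K+1), P, w, h => by
      rw [show propW n (K+1) P w
          = propW n K (fun s => P s.succ) (fun j => ∑ i, w i * P 0 i j) from rfl,
        propW_sum n K _ _ (fun t i => h t.succ i)]
      rw [Finset.sum_comm]
      simp [← Finset.mul_sum, h 0]

lemma propW_eq (n : ℕ) : ∀ (K : ℕ) (P : Fin K → Matrix (Fin n) (Fin n) ℝ)
    (w : Fin (K+1) → Fin n → ℝ),
    (∀ t : Fin K, ∀ j, w t.succ j = ∑ i, w t.castSucc i * P t i j) →
    propW n K P (w 0) = w (Fin.last K)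
  | 0, P, w, h => rfl
  | (K+1), P, w, h => by
      have h1 : (fun j => ∑ i, w 0 i * P 0 i j) = w 1 := by
        funext j
        rw [show (1 : Fin (K+2)) = Fin.succ 0 from rfl, h 0 j]
        rfl
      rw [show propW n (K+1) P (w 0)
          = propW n K (fun s => P s.succ) (fun j => ∑ i, w 0 i * P 0 i j) from rfl, h1]
      have := propW_eq n K (fun s => P s.succ) (fun t => w t.succ) (fun t j => by
        simpa [← Fin.succ_castSucc] using h t.succ j)
      simpa [Fin.succ_last] using this
/-- The Schrödinger bridge constructed from a solution of the Schrödinger system is a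
probability measure on paths with the prescribed endpoint marginals. -/
theorem schroedinger_bridge_is_probability_with_marginals
    (n N : ℕ) (hn : 1 ≤ n) (hN : 1 ≤ N)
    (M : Matrix (Fin n) (Fin n) ℝ) (hM : ∀ i j, 0 ≤ M i j)
    (hMN : ∀ i j, 0 < (M ^ N) i j)
    (ν0 νN : Fin n → ℝ)
    (hν00 : ∀ i, 0 ≤ ν0 i) (hν01 : ∑ i, ν0 i = 1)
    (hνN0 : ∀ j, 0 ≤ νN j) (hνN1 : ∑ j, νN j = 1)
    (φ φh : Fin (N + 1) → Fin n → ℝ)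
    (hφpos : ∀ t x, 0 < φ t x) (hφh0 : ∀ t x, 0 ≤ φh t x)
    (hrec : ∀ t : Fin N, ∀ i, φ t.castSucc i = ∑ j, M i j * φ t.succ j)
    (hrech : ∀ t : Fin N, ∀ j, φh t.succ j = ∑ i, M i j * φh t.castSucc i)
    (hbc0 : ∀ x, φ 0 x * φh 0 x = ν0 x)
    (hbcN : ∀ x, φ (Fin.last N) x * φh (Fin.last N) x = νN x) :
    (∀ x : Fin (N + 1) → Fin n,
        0 ≤ ν0 (x 0) * ∏ t : Fin N,
          (M (x t.castSucc) (x t.succ) * φ t.succ (x t.succ) / φ t.castSucc (x t.castSucc))) ∧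
      (∑ x : Fin (N + 1) → Fin n,
        ν0 (x 0) * ∏ t : Fin N,
          (M (x t.castSucc) (x t.succ) * φ t.succ (x t.succ) / φ t.castSucc (x t.castSucc))) = 1 ∧
      (∀ i, (∑ x : Fin (N + 1) → Fin n,
        if x 0 = i then
          ν0 (x 0) * ∏ t : Fin N,
            (M (x t.castSucc) (x t.succ) * φ t.succ (x t.succ) / φ t.castSucc (x t.castSucc))
        else 0) = ν0 i) ∧
      (∀ j, (∑ x : Fin (N + 1) → Fin n,
        if x (Fin.last N) = j then
          ν0 (x 0) * ∏ t : Fin N,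
            (M (x t.castSucc) (x t.succ) * φ t.succ (x t.succ) / φ t.castSucc (x t.castSucc))
        else 0) = νN j) := by
  set P : Fin N → Matrix (Fin n) (Fin n) ℝ :=
    fun t i j => M i j * φ t.succ j / φ t.castSucc i with hP
  have hrow : ∀ t i, ∑ j, P t i j = 1 := by
    intro t i
    have : (∑ j, P t i j) = (∑ j, M i j * φ t.succ j) / φ t.castSucc i := by
      rw [Finset.sum_div]
    rw [this, ← hrec t i, div_self (hφpos t.castSucc i).ne']
  have hw : ∀ t : Fin N, ∀ j, (fun t x => φ t x * φh t x) t.succ j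
      = ∑ i, (fun t x => φ t x * φh t x) t.castSucc i * P t i j := by
    intro t j
    simp only
    rw [hrech t j, Finset.mul_sum]
    refine Finset.sum_congr rfl fun i _ => ?_
    have h := (hφpos t.castSucc i).ne'
    simp only [hP]
    field_simp [hP]
  refine ⟨?_, ?_, ?_, ?_⟩
  · intro x
    refine mul_nonneg (hν00 _) (Finset.prod_nonneg fun t _ => ?_)
    exact div_nonneg (mul_nonneg (hM _ _) (hφpos _ _).le) (hφpos _ _).le
  · have := pathSum n N P ν0 (fun _ => 1)
    simp only [mul_one] at this
    rw [this, propW_sum n N P ν0 hrow, hν01]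
  · intro i
    have := pathSum n N P (fun y => if y = i then ν0 y else 0) (fun _ => 1)
    simp only [mul_one] at this
    have h2 : ∀ x : Fin (N+1) → Fin n,
        (if x 0 = i then ν0 (x 0) * ∏ t : Fin N, P t (x t.castSucc) (x t.succ) else 0)
        = (if x 0 = i then ν0 (x 0) else 0) * ∏ t : Fin N, P t (x t.castSucc) (x t.succ) := by
      intro x
      split <;> simp
    rw [show (∑ x : Fin (N + 1) → Fin n,
        if x 0 = i then ν0 (x 0) * ∏ t : Fin N,
          (M (x t.castSucc) (x t.succ) * φ t.succ (x t.succ) / φ t.castSucc (x t.castSucc))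
        else 0) = ∑ x : Fin (N+1) → Fin n,
          (if x 0 = i then ν0 (x 0) else 0) * ∏ t : Fin N, P t (x t.castSucc) (x t.succ)
      from Finset.sum_congr rfl fun x _ => h2 x, this,
      propW_sum n N P _ hrow, Finset.sum_ite_eq' univ i ν0, if_pos (Finset.mem_univ i)]
  · intro j
    have := pathSum n N P ν0 (fun y => if y = j then 1 else 0)
    have h2 : ∀ x : Fin (N+1) → Fin n,
        (if x (Fin.last N) = j then ν0 (x 0) * ∏ t : Fin N, P t (x t.castSucc) (x t.succ) else 0)
        = ν0 (x 0) * (∏ t : Fin N, P t (x t.castSucc) (x t.succ)) *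
            (if x (Fin.last N) = j then 1 else 0) := by
      intro x
      split <;> simp
    rw [show (∑ x : Fin (N + 1) → Fin n,
        if x (Fin.last N) = j then ν0 (x 0) * ∏ t : Fin N,
          (M (x t.castSucc) (x t.succ) * φ t.succ (x t.succ) / φ t.castSucc (x t.castSucc))
        else 0) = ∑ x : Fin (N+1) → Fin n,
          ν0 (x 0) * (∏ t : Fin N, P t (x t.castSucc) (x t.succ)) *
            (if x (Fin.last N) = j then 1 else 0)
      from Finset.sum_congr rfl fun x _ => h2 x, this]
    have hν0 : ν0 = (fun t x => φ t x * φh t x) (0 : Fin (N+1)) := by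
      funext x
      exact (hbc0 x).symm
    rw [hν0, propW_eq n N P (fun t x => φ t x * φh t x) hw]
    simp only [mul_ite, mul_one, mul_zero]
    rw [Finset.sum_ite_eq' univ j, if_pos (Finset.mem_univ j)]
    exact hbcN j
end

section
/- Let A be the adjacency matrix of a strongly connected aperiodic graph with (Aᴺ)_{1n} > 0, and let P* be the path measure on {1,…,n}^{N+1} obtained from the Schrödinger bridge with prior transition A and marginals δ₁ at time 0 and δ_n at time N (i.e., P*(x) = δ₁(x₀) (φ_v(N,x_N)/φ_v(0,x₀)) ∏_{t=0}^{N−1} a_{x_t x_{t+1}} for a positive solution φ_v of φ_v(t) = Aφ_v(t+1)). Then P* assigns probability exactly 1/(Aᴺ)_{1n} to each admissible path of length N from node 1 to node n, and probability 0 to all other paths. -/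
open Matrix Finset

lemma pathSum_eq {n : ℕ} (A : Matrix (Fin (n+1)) (Fin (n+1)) ℝ) :
    ∀ (N : ℕ) (i j : Fin (n+1)),
      (∑ x : Fin (N+1) → Fin (n+1),
        if x 0 = i ∧ x (Fin.last N) = j then
          ∏ t : Fin N, A (x t.castSucc) (x t.succ) else 0) = (A ^ N) i j := by
  intro N
  induction N with
  | zero =>
      intro i j
      have key : (∑ x : Fin 1 → Fin (n+1),
          if x 0 = i ∧ x (Fin.last 0) = j then
            ∏ t : Fin 0, A (x t.castSucc) (x t.succ) else 0)
          = ∑ a : Fin (n+1), if a = i ∧ a = j then (1 : ℝ) else 0 := by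
        refine Fintype.sum_equiv (Equiv.funUnique (Fin 1) (Fin (n+1))) _ _ ?_
        intro x
        have : x (Fin.last 0) = x 0 := rfl
        simp [this, Equiv.funUnique]
      rw [key]
      by_cases h : i = j
      · subst h; simp
      · simp [h, fun a => show ¬(a = i ∧ a = j) from fun ⟨h1, h2⟩ => h (h1 ▸ h2 ▸ rfl),
          Matrix.one_apply]
  | succ N ih =>
      intro i j
      have key : (∑ x : Fin (N+1+1) → Fin (n+1),
          if x 0 = i ∧ x (Fin.last (N+1)) = j then
            ∏ t : Fin (N+1), A (x t.castSucc) (x t.succ) else 0)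
          = ∑ p : Fin (n+1) × (Fin (N+1) → Fin (n+1)),
              if p.1 = i ∧ p.2 (Fin.last N) = j then
                A p.1 (p.2 0) * ∏ t : Fin N, A (p.2 t.castSucc) (p.2 t.succ) else 0 := by
        refine (Fintype.sum_equiv (Fin.consEquiv (fun _ : Fin (N+2) => Fin (n+1))) _ _ ?_).symm
        intro p
        obtain ⟨k, y⟩ := p
        simp only [Fin.consEquiv_apply]
        rw [Fin.cons_zero, ← Fin.succ_last, Fin.cons_succ, Fin.prod_univ_succ]
        simp only [Fin.castSucc_zero, Fin.cons_zero, ← Fin.succ_castSucc, Fin.cons_succ]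
      rw [key, Fintype.sum_prod_type]
      have step : ∀ k : Fin (n+1), (∑ y : Fin (N+1) → Fin (n+1),
          if k = i ∧ y (Fin.last N) = j then
            A k (y 0) * ∏ t : Fin N, A (y t.castSucc) (y t.succ) else 0)
          = if k = i then
              (∑ y : Fin (N+1) → Fin (n+1), if y (Fin.last N) = j then
                A i (y 0) * ∏ t : Fin N, A (y t.castSucc) (y t.succ) else 0) else 0 := by
        intro k
        by_cases hk : k = i
        · subst hk; simp
        · simp [hk]
      rw [Finset.sum_congr rfl (fun k _ => step k), Finset.sum_ite_eq' Finset.univ i]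
      simp only [Finset.mem_univ, if_true]
      have rhs : (A ^ (N+1)) i j = ∑ m, A i m * (A ^ N) m j := by
        rw [pow_succ', Matrix.mul_apply]
      rw [rhs]
      have hm : ∀ m : Fin (n+1), A i m * (A ^ N) m j = ∑ y : Fin (N+1) → Fin (n+1),
          if y 0 = m ∧ y (Fin.last N) = j then
            A i m * ∏ t : Fin N, A (y t.castSucc) (y t.succ) else 0 := by
        intro m
        rw [← ih m j, Finset.mul_sum]
        exact Finset.sum_congr rfl (fun y _ => by rw [mul_ite, mul_zero])
      rw [Finset.sum_congr rfl (fun m _ => hm m), Finset.sum_comm]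
      refine Finset.sum_congr rfl (fun y _ => ?_)
      by_cases hy : y (Fin.last N) = j
      · simp only [hy, and_true, if_true]
        rw [Finset.sum_ite_eq Finset.univ (y 0)]
        simp
      · simp [hy]

/-- The Schrödinger bridge with prior transition the adjacency matrix and point-mass
marginals at the source (node `0`) and the sink (node `last`) assigns probability
`1/(Aᴺ)_{1n}` to every admissible path of length `N` from source to sink, and
probability `0` to every other path. -/
theorem bridge_uniform_on_feasible_paths
    (n N : ℕ) (hN : 1 ≤ N)
    (A : Matrix (Fin (n + 1)) (Fin (n + 1)) ℝ)
    (h01 : ∀ i j, A i j = 0 ∨ A i j = 1)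
    (hcount : 0 < (A ^ N) 0 (Fin.last n))
    (φv : Fin (N + 1) → Fin (n + 1) → ℝ) (hφpos : ∀ t x, 0 < φv t x)
    (hrec : ∀ t : Fin N, ∀ i, φv t.castSucc i = ∑ j, A i j * φv t.succ j)
    (hmargN : ∀ j : Fin (n + 1),
      (∑ x : Fin (N + 1) → Fin (n + 1),
        if x (Fin.last N) = j then
          (if x 0 = 0 then (1 : ℝ) else 0) *
            (φv (Fin.last N) (x (Fin.last N)) / φv 0 (x 0)) *
            ∏ t : Fin N, A (x t.castSucc) (x t.succ)
        else 0) = if j = Fin.last n then 1 else 0) :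
    ∀ x : Fin (N + 1) → Fin (n + 1),
      ((x 0 = 0 ∧ x (Fin.last N) = Fin.last n ∧
          ∀ t : Fin N, A (x t.castSucc) (x t.succ) = 1) →
        (if x 0 = 0 then (1 : ℝ) else 0) *
            (φv (Fin.last N) (x (Fin.last N)) / φv 0 (x 0)) *
            ∏ t : Fin N, A (x t.castSucc) (x t.succ) =
          1 / (A ^ N) 0 (Fin.last n)) ∧
      (¬ (x 0 = 0 ∧ x (Fin.last N) = Fin.last n ∧
          ∀ t : Fin N, A (x t.castSucc) (x t.succ) = 1) →
        (if x 0 = 0 then (1 : ℝ) else 0) *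
            (φv (Fin.last N) (x (Fin.last N)) / φv 0 (x 0)) *
            ∏ t : Fin N, A (x t.castSucc) (x t.succ) = 0) := by
  -- The marginal constraint, rewritten via the path-counting lemma.
  have hsum : ∀ j : Fin (n + 1),
      (φv (Fin.last N) j / φv 0 0) * (A ^ N) 0 j = if j = Fin.last n then 1 else 0 := by
    intro j
    rw [← hmargN j, ← pathSum_eq A N 0 j, Finset.mul_sum]
    refine Finset.sum_congr rfl (fun x _ => ?_)
    by_cases hl : x (Fin.last N) = j
    · by_cases h0 : x 0 = 0
      · simp [hl, h0]
      · simp [hl, h0]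
    · simp [hl]
  intro x
  constructor
  · rintro ⟨h0, hl, hA⟩
    have hprod : (∏ t : Fin N, A (x t.castSucc) (x t.succ)) = 1 :=
      Finset.prod_eq_one (fun t _ => hA t)
    have hs := hsum (Fin.last n)
    rw [if_pos rfl] at hs
    rw [h0, hl, hprod, if_pos rfl, mul_one, one_mul]
    field_simp at hs ⊢
    linarith [hs]
  · intro hbad
    by_cases h0 : x 0 = 0
    · by_cases hl : x (Fin.last N) = Fin.last n
      · -- some transition has A-entry 0
        have : ∃ t : Fin N, A (x t.castSucc) (x t.succ) ≠ 1 := by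
          by_contra hc
          push_neg at hc
          exact hbad ⟨h0, hl, hc⟩
        obtain ⟨t, ht⟩ := this
        have hz : A (x t.castSucc) (x t.succ) = 0 := (h01 _ _).resolve_right ht
        rw [Finset.prod_eq_zero (Finset.mem_univ t) hz, mul_zero]
      · -- the final marginal vanishes at x (Fin.last N)
        have hs := hsum (x (Fin.last N))
        rw [if_neg hl] at hs
        have hratio : 0 < φv (Fin.last N) (x (Fin.last N)) / φv 0 0 :=
          div_pos (hφpos _ _) (hφpos _ _)
        have hAN : (A ^ N) 0 (x (Fin.last N)) = 0 := by
          rcases mul_eq_zero.mp hs with h | h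
          · exact absurd h (ne_of_gt hratio)
          · exact h
        -- the sum of nonnegative path weights is zero, so each path weight is zero
        have hps := pathSum_eq A N 0 (x (Fin.last N))
        rw [hAN] at hps
        have hnonneg : ∀ y : Fin (N+1) → Fin (n+1), y ∈ Finset.univ →
            (0:ℝ) ≤ if y 0 = 0 ∧ y (Fin.last N) = x (Fin.last N) then
              ∏ t : Fin N, A (y t.castSucc) (y t.succ) else 0 := by
          intro y _
          split
          · exact Finset.prod_nonneg (fun t _ => by rcases h01 (y t.castSucc) (y t.succ) with h | h <;> simp [h])
          · exact le_rfl
        have := (Finset.sum_eq_zero_iff_of_nonneg hnonneg).mp hps x (Finset.mem_univ x)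
        rw [if_pos ⟨h0, rfl⟩] at this
        rw [this, mul_zero]
    · rw [if_neg h0, zero_mul, zero_mul]
end

section
/- Let A be a nonnegative n×n matrix such that Aᴺ has all positive entries. If w₁ and w₂ are both nonnegative nonzero eigenvectors of A (for possibly different eigenvalues), then both eigenvalues equal the spectral radius λ_A and w₂ is a positive scalar multiple of w₁. -/
open Matrix

lemma PF.eig_pow {n : ℕ} (A : Matrix (Fin n) (Fin n) ℝ) (w : Fin n → ℝ) (μ : ℝ)
    (h : A *ᵥ w = μ • w) (k : ℕ) : A ^ k *ᵥ w = μ ^ k • w := by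
  induction k with
  | zero => simp
  | succ k ih =>
    rw [pow_succ, ← mulVec_mulVec, h, mulVec_smul, ih, smul_smul, pow_succ]
    ring_nf

lemma PF.entries_pos {n N : ℕ} {A : Matrix (Fin n) (Fin n) ℝ}
    (hAN : ∀ i j, 0 < (A ^ N) i j) {w : Fin n → ℝ} (hw0 : ∀ i, 0 ≤ w i)
    (hwne : w ≠ 0) {μ : ℝ} (h : A *ᵥ w = μ • w) : ∀ i, 0 < w i := by
  obtain ⟨j0, hj0⟩ : ∃ j, 0 < w j := by
    by_contra hc
    push_neg at hc
    exact hwne (funext fun i => le_antisymm (hc i) (hw0 i))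
  intro i
  have h1 : 0 < (A ^ N *ᵥ w) i := by
    rw [Matrix.mulVec, dotProduct]
    exact Finset.sum_pos' (fun j _ => mul_nonneg (hAN i j).le (hw0 j))
      ⟨j0, Finset.mem_univ j0, mul_pos (hAN i j0) hj0⟩
  rw [PF.eig_pow A w μ h N] at h1
  simp only [Pi.smul_apply, smul_eq_mul] at h1
  rcases (hw0 i).lt_or_eq with h' | h'
  · exact h'
  · exfalso; rw [← h'] at h1; nlinarith

lemma PF.aux_lt {n N : ℕ} [NeZero n] {A : Matrix (Fin n) (Fin n) ℝ}
    (hAN : ∀ i j, 0 < (A ^ N) i j)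
    {w₁ w₂ : Fin n → ℝ} (hw₁ : ∀ i, 0 < w₁ i) (hw₂ : ∀ i, 0 < w₂ i)
    {μ₁ μ₂ : ℝ} (h₁ : A *ᵥ w₁ = μ₁ • w₁) (h₂ : A *ᵥ w₂ = μ₂ • w₂) :
    (∃ c : ℝ, 0 < c ∧ w₂ = c • w₁) ∨ μ₁ ^ N < μ₂ ^ N := by
  have hne : (Finset.univ : Finset (Fin n)).Nonempty := Finset.univ_nonempty
  set c := Finset.univ.inf' hne (fun i => w₂ i / w₁ i) with hc
  obtain ⟨k, -, hk⟩ := Finset.exists_mem_eq_inf' hne (fun i => w₂ i / w₁ i)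
  have hcpos : 0 < c := by
    rw [← hc] at hk
    rw [hk]
    exact div_pos (hw₂ k) (hw₁ k)
  have hle : ∀ i, c * w₁ i ≤ w₂ i := by
    intro i
    have := Finset.inf'_le (fun i => w₂ i / w₁ i) (Finset.mem_univ i)
    rw [← hc] at this
    rw [← le_div_iff₀ (hw₁ i)]
    exact this
  have hkeq : w₂ k = c * w₁ k := by
    rw [← hc] at hk
    rw [hk, div_mul_cancel₀ _ (hw₁ k).ne']
  set u : Fin n → ℝ := fun i => w₂ i - c * w₁ i with hu
  by_cases huz : u = 0
  · left
    refine ⟨c, hcpos, funext fun i => ?_⟩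
    have := congrFun huz i
    simp only [hu, Pi.zero_apply] at this
    simp only [Pi.smul_apply, smul_eq_mul]
    linarith
  · right
    obtain ⟨j0, hj0⟩ : ∃ j, 0 < u j := by
      by_contra hcon
      push_neg at hcon
      exact huz (funext fun i => le_antisymm (hcon i)
        (by simp only [hu, Pi.zero_apply]; linarith [hle i]))
    have hmv : A ^ N *ᵥ u = μ₂ ^ N • w₂ - c • (μ₁ ^ N • w₁) := by
      have : u = w₂ - c • w₁ := by
        funext i; simp [hu]
      rw [this, mulVec_sub, mulVec_smul, PF.eig_pow A w₁ μ₁ h₁ N, PF.eig_pow A w₂ μ₂ h₂ N]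
    have hpos : 0 < (A ^ N *ᵥ u) k := by
      rw [Matrix.mulVec, dotProduct]
      exact Finset.sum_pos' (fun j _ => mul_nonneg (hAN k j).le
          (by simp only [hu]; linarith [hle j]))
        ⟨j0, Finset.mem_univ j0, mul_pos (hAN k j0) hj0⟩
    rw [hmv] at hpos
    simp only [Pi.sub_apply, Pi.smul_apply, smul_eq_mul] at hpos
    rw [hkeq] at hpos
    nlinarith [mul_pos hcpos (hw₁ k)]

lemma PF.mem_spectrum_iff_eigen {n : ℕ} (M : Matrix (Fin n) (Fin n) ℂ) (z : ℂ) :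
    z ∈ spectrum ℂ M ↔ ∃ v : Fin n → ℂ, v ≠ 0 ∧ M *ᵥ v = z • v := by
  rw [spectrum.mem_iff]
  have h1 : ¬IsUnit (algebraMap ℂ (Matrix (Fin n) (Fin n) ℂ) z - M) ↔
      (algebraMap ℂ (Matrix (Fin n) (Fin n) ℂ) z - M).det = 0 := by
    rw [Matrix.isUnit_iff_isUnit_det, isUnit_iff_ne_zero, not_not]
  rw [h1, ← Matrix.exists_mulVec_eq_zero_iff]
  constructor
  · rintro ⟨v, hv, hv2⟩
    refine ⟨v, hv, ?_⟩
    rw [sub_mulVec, Algebra.algebraMap_eq_smul_one, smul_mulVec, one_mulVec,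
      sub_eq_zero] at hv2
    exact hv2.symm
  · rintro ⟨v, hv, hv2⟩
    refine ⟨v, hv, ?_⟩
    rw [sub_mulVec, Algebra.algebraMap_eq_smul_one, smul_mulVec, one_mulVec,
      sub_eq_zero, hv2]

lemma PF.specRad_eq {n : ℕ} [NeZero n] (A : Matrix (Fin n) (Fin n) ℝ) (hA : ∀ i j, 0 ≤ A i j)
    (w : Fin n → ℝ) (hw : ∀ i, 0 < w i) (μ : ℝ) (hμ0 : 0 ≤ μ) (h : A *ᵥ w = μ • w) :
    specRad A = μ := by
  have hne : (Finset.univ : Finset (Fin n)).Nonempty := Finset.univ_nonempty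
  obtain ⟨i0⟩ : Nonempty (Fin n) := inferInstance
  apply IsGreatest.csSup_eq
  constructor
  · refine ⟨(μ : ℂ), ?_, ?_⟩
    · rw [PF.mem_spectrum_iff_eigen]
      refine ⟨fun i => (w i : ℂ), ?_, ?_⟩
      · intro hz
        have := congrFun hz i0
        simp only [Pi.zero_apply, Complex.ofReal_eq_zero] at this
        exact (hw i0).ne' this
      · funext i
        have hr := congrFun h i
        simp only [Pi.smul_apply, smul_eq_mul] at hr ⊢
        rw [Matrix.mulVec, dotProduct] at hr ⊢
        simp only [Matrix.map_apply, Complex.coe_algebraMap]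
        exact_mod_cast hr
    · rw [Complex.norm_real, Real.norm_eq_abs, abs_of_nonneg hμ0]
  · rintro r ⟨z, hz, rfl⟩
    rw [PF.mem_spectrum_iff_eigen] at hz
    obtain ⟨v, hv, hv2⟩ := hz
    set x : Fin n → ℝ := fun i => ‖v i‖ with hx
    have hx0 : ∀ i, 0 ≤ x i := fun i => norm_nonneg _
    obtain ⟨j0, hj0⟩ : ∃ j, 0 < x j := by
      by_contra hc
      push_neg at hc
      refine hv (funext fun i => ?_)
      have h0 : ‖v i‖ = 0 := le_antisymm (hc i) (hx0 i)
      simpa using norm_eq_zero.mp h0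
    have key : ∀ i, ‖z‖ * x i ≤ (A *ᵥ x) i := by
      intro i
      have hvi := congrFun hv2 i
      simp only [Pi.smul_apply, smul_eq_mul] at hvi
      have : ‖z‖ * x i = ‖((A.map (algebraMap ℝ ℂ)) *ᵥ v) i‖ := by
        rw [hvi, norm_mul]
      rw [this, Matrix.mulVec, dotProduct]
      calc ‖∑ j, (A.map (algebraMap ℝ ℂ)) i j * v j‖
          ≤ ∑ j, ‖(A.map (algebraMap ℝ ℂ)) i j * v j‖ := by
            exact norm_sum_le _ _
        _ = (A *ᵥ x) i := by
            rw [Matrix.mulVec, dotProduct]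
            refine Finset.sum_congr rfl fun j _ => ?_
            simp only [norm_mul, Matrix.map_apply, Complex.coe_algebraMap,
              Complex.norm_real, Real.norm_eq_abs, hx]
            rw [abs_of_nonneg (hA i j)]
    set t := Finset.univ.sup' hne (fun i => x i / w i) with ht
    obtain ⟨k, -, hk⟩ := Finset.exists_mem_eq_sup' hne (fun i => x i / w i)
    have htpos : 0 < t := by
      have := Finset.le_sup' (fun i => x i / w i) (Finset.mem_univ j0)
      rw [← ht] at this
      exact lt_of_lt_of_le (div_pos hj0 (hw j0)) this
    have hle : ∀ i, x i ≤ t * w i := by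
      intro i
      have := Finset.le_sup' (fun i => x i / w i) (Finset.mem_univ i)
      rw [← ht] at this
      exact (div_le_iff₀ (hw i)).mp this
    have hkeq : x k = t * w k := by
      rw [ht, hk, div_mul_cancel₀ _ (hw k).ne']
    have h1 : ‖z‖ * x k ≤ (A *ᵥ x) k := key k
    have h2 : (A *ᵥ x) k ≤ t * (μ * w k) := by
      have : (A *ᵥ x) k ≤ ∑ j, A k j * (t * w j) := by
        rw [Matrix.mulVec, dotProduct]
        exact Finset.sum_le_sum fun j _ => mul_le_mul_of_nonneg_left (hle j) (hA k j)
      refine this.trans_eq ?_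
      have hr := congrFun h k
      simp only [Pi.smul_apply, smul_eq_mul] at hr
      rw [Matrix.mulVec, dotProduct] at hr
      calc ∑ j, A k j * (t * w j) = t * ∑ j, A k j * w j := by
            rw [Finset.mul_sum]; exact Finset.sum_congr rfl fun j _ => by ring
        _ = t * (μ * w k) := by rw [hr]
    have h3 : 0 < t * w k := mul_pos htpos (hw k)
    nlinarith [hkeq, h1, h2, h3]

/-- Perron–Frobenius ii)–iv): for a primitive nonnegative matrix, any two
nonnegative nonzero eigenvectors correspond to the spectral radius and are
positive multiples of each other. -/
theorem nonnegative_eigenvectors_are_perron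
    (n N : ℕ) (A : Matrix (Fin n) (Fin n) ℝ)
    (hA : ∀ i j, 0 ≤ A i j) (hAN : ∀ i j, 0 < (A ^ N) i j)
    (w₁ w₂ : Fin n → ℝ) (hw₁0 : ∀ i, 0 ≤ w₁ i) (hw₂0 : ∀ i, 0 ≤ w₂ i)
    (hw₁ne : w₁ ≠ 0) (hw₂ne : w₂ ≠ 0)
    (μ₁ μ₂ : ℝ) (h₁ : A *ᵥ w₁ = μ₁ • w₁) (h₂ : A *ᵥ w₂ = μ₂ • w₂) :
    μ₁ = specRad A ∧ μ₂ = specRad A ∧ ∃ c : ℝ, 0 < c ∧ w₂ = c • w₁ := by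
  have hn : n ≠ 0 := by
    rintro rfl
    exact hw₁ne (funext fun i => i.elim0)
  haveI : NeZero n := ⟨hn⟩
  obtain ⟨i0⟩ : Nonempty (Fin n) := inferInstance
  have hp₁ : ∀ i, 0 < w₁ i := PF.entries_pos hAN hw₁0 hw₁ne h₁
  have hp₂ : ∀ i, 0 < w₂ i := PF.entries_pos hAN hw₂0 hw₂ne h₂
  have hμnn : ∀ (w : Fin n → ℝ) (μ : ℝ), (∀ i, 0 < w i) → A *ᵥ w = μ • w → 0 ≤ μ := by
    intro w μ hw h
    have hr := congrFun h i0
    simp only [Pi.smul_apply, smul_eq_mul] at hr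
    rw [Matrix.mulVec, dotProduct] at hr
    have hs : 0 ≤ ∑ j, A i0 j * w j :=
      Finset.sum_nonneg fun j _ => mul_nonneg (hA i0 j) (hw j).le
    nlinarith [hw i0]
  have hμ₁0 : 0 ≤ μ₁ := hμnn w₁ μ₁ hp₁ h₁
  -- proportionality
  have hprop : ∃ c : ℝ, 0 < c ∧ w₂ = c • w₁ := by
    rcases PF.aux_lt hAN hp₁ hp₂ h₁ h₂ with hgood | hlt
    · exact hgood
    rcases PF.aux_lt hAN hp₂ hp₁ h₂ h₁ with ⟨c, hc, hcw⟩ | hlt'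
    · refine ⟨c⁻¹, inv_pos.mpr hc, funext fun i => ?_⟩
      have := congrFun hcw i
      simp only [Pi.smul_apply, smul_eq_mul] at this ⊢
      field_simp
      linarith [this]
    · linarith
  obtain ⟨c, hc, hcw⟩ := hprop
  have hμeq : μ₁ = μ₂ := by
    have e1 := congrFun h₂ i0
    rw [hcw] at e1
    rw [mulVec_smul, h₁] at e1
    simp only [Pi.smul_apply, smul_eq_mul] at e1
    have := hp₁ i0
    have hcne : c * w₁ i0 > 0 := mul_pos hc this
    nlinarith [e1]
  have hs : specRad A = μ₁ := PF.specRad_eq A hA w₁ hp₁ μ₁ hμ₁0 h₁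
  exact ⟨hs.symm, by rw [hs, hμeq], c, hc, hcw⟩
end

section
/- Let M be an n×n matrix with all positive entries and let D₁, D₂ be diagonal matrices with positive diagonals such that M = D₁ M D₂⁻¹. Then D₂ is a scalar matrix, D₂ = λI for some λ > 0, and D₁ = λI as well. -/
open Matrix

/-- If a positive matrix `M` satisfies `M = D₁ M D₂⁻¹` for diagonal matrices with
positive diagonals, then `D₂ = λI` and `D₁ = λI` for some `λ > 0`. -/
theorem diagonal_conjugation_of_positive_matrix_is_scalar
    (n : ℕ) (hn : 2 ≤ n)
    (M : Matrix (Fin n) (Fin n) ℝ) (hM : ∀ i j, 0 < M i j)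
    (d e : Fin n → ℝ) (hd : ∀ i, 0 < d i) (he : ∀ i, 0 < e i)
    (h : M = Matrix.diagonal d * M * (Matrix.diagonal e)⁻¹) :
    ∃ lam : ℝ, 0 < lam ∧
      Matrix.diagonal e = lam • (1 : Matrix (Fin n) (Fin n) ℝ) ∧
      Matrix.diagonal d = lam • (1 : Matrix (Fin n) (Fin n) ℝ) := by
  have hdet : IsUnit (Matrix.diagonal e).det := by
    rw [Matrix.det_diagonal]
    exact (Finset.prod_pos fun i _ => he i).ne'.isUnit
  have h2 : M * Matrix.diagonal e = Matrix.diagonal d * M := by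
    conv_lhs => rw [h]
    rw [Matrix.mul_assoc, Matrix.mul_assoc, Matrix.nonsing_inv_mul _ hdet, Matrix.mul_one]
  have key : ∀ i j, d i = e j := by
    intro i j
    have := congrFun (congrFun h2 i) j
    rw [Matrix.mul_diagonal, Matrix.diagonal_mul] at this
    rw [mul_comm (M i j)] at this
    exact (mul_right_cancel₀ (hM i j).ne' this).symm
  have h0 : 0 < n := lt_of_lt_of_le (by norm_num) hn
  refine ⟨e ⟨0, h0⟩, he _, ?_, ?_⟩
  · ext i j
    by_cases hij : i = j
    · subst hij
      have : e i = e ⟨0, h0⟩ := by rw [← key ⟨0, h0⟩ i, key ⟨0, h0⟩ ⟨0, h0⟩]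
      simp [this]
    · simp [Matrix.diagonal_apply_ne _ hij, Matrix.one_apply_ne hij]
  · ext i j
    by_cases hij : i = j
    · subst hij
      simp [key i ⟨0, h0⟩]
    · simp [Matrix.diagonal_apply_ne _ hij, Matrix.one_apply_ne hij]
end
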